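/- Let F : ℕ → ℤ satisfy F 0 = 0, F 1 = 1, F (n+2) = -2 F (n+1) + 2 F n, and define Gaussian integers A_n = F(n+1)^2 - 2 F(n+1) F(n) - 2 F(n)^2, B_n = i F(n+1)^2 + 2 F(n+1) F(n) + 2i F(n)^2, C_n = i F(n+1)^2 - 2 F(n+1) F(n) + 2i F(n)^2. Then for all n, A_n^5 + B_n^5 = C_n^5 + 2^{5n} * (-1)^n. -/
import Mathlib

theorem stmt_7 (F : ℕ → ℤ) (h0 : F 0 = 0) (h1 : F 1 = 1)
    (hrec : ∀ n, F (n+2) = -2 * F (n+1) + 2 * F n)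
    (A B C : ℕ → GaussianInt)
    (hA : ∀ n, A n = (F (n+1) : GaussianInt)^2 - 2 * (F (n+1) : GaussianInt) * (F n : GaussianInt) - 2 * (F n : GaussianInt)^2)
    (hB : ∀ n, B n = Zsqrtd.sqrtd * (F (n+1) : GaussianInt)^2 + 2 * (F (n+1) : GaussianInt) * (F n : GaussianInt)
        + 2 * Zsqrtd.sqrtd * (F n : GaussianInt)^2)
    (hC : ∀ n, C n = Zsqrtd.sqrtd * (F (n+1) : GaussianInt)^2 - 2 * (F (n+1) : GaussianInt) * (F n : GaussianInt)
        + 2 * Zsqrtd.sqrtd * (F n : GaussianInt)^2) :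
    ∀ n : ℕ, (A n)^5 + (B n)^5 = (C n)^5 + 2^(5*n) * (-1)^n := by
  have key : ∀ n : ℕ, F (n+1)^2 + 2 * F (n+1) * F n - 2 * (F n)^2 = (-2)^n := by
    intro n
    induction n with
    | zero => simp [h0, h1]
    | succ k ih =>
      rw [hrec k]
      linear_combination (-2 : ℤ) * ih
  intro n
  set x : GaussianInt := (F (n+1) : GaussianInt) with hx
  set y : GaussianInt := (F n : GaussianInt) with hy
  have hkey : x^2 + 2 * x * y - 2 * y^2 = (-2)^n := by
    rw [hx, hy]
    exact_mod_cast congrArg (fun z : ℤ => (z : GaussianInt)) (key n)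
  set i : GaussianInt := Zsqrtd.sqrtd with hi
  have hi2 : i^2 = -1 := by
    rw [hi]
    ext <;> simp [pow_two, Zsqrtd.sqrtd]
  have hpow : ((-2:GaussianInt)^n)^5 = 2^(5*n)*(-1)^n := by
    rw [← pow_mul, mul_comm n 5, neg_pow, pow_mul (-1:GaussianInt) 5 n]
    norm_num [mul_comm]
  rw [hA, hB, hC, ← hx, ← hy]
  have : (2:GaussianInt)^(5*n) * (-1)^n = (x^2 + 2*x*y - 2*y^2)^5 := by
    rw [hkey, hpow]
  rw [this]
  linear_combination ((-320:GaussianInt)*x^1*y^9 + (160:GaussianInt)*x^5*y^5 + (-20:GaussianInt)*x^9*y^1 + (320:GaussianInt)*i^2*x^1*y^9 + (640:GaussianInt)*i^2*x^3*y^7 + (480:GaussianInt)*i^2*x^5*y^5 + (160:GaussianInt)*i^2*x^7*y^3 + (20:GaussianInt)*i^2*x^9*y^1) * hi2
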